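/- arXiv:1406.2370 — 2 statements merged into one kernel-verified Lean document; each statement's English description precedes it below -/
import Mathlib

section
/- Abstract Simulation Theorem for distilleries: given a distillery (M, C, ≡, decode), for every machine execution ρ : s →* s' there exists a derivation d : decode(s) ⊸* t with t ≡ decode(s') such that the number of multiplicative machine transitions in ρ equals the number of ⊸ₘ steps in d, the number of exponential machine transitions in ρ equals the number of ⊸ₑ steps in d, and the number of principal transitions in ρ equals the length of d. -/
/-- Machine executions, counting commutative, multiplicative and exponential
    transitions. -/
inductive Exec {σ : Type*} (Rc Rmm Rme : σ → σ → Prop) : ℕ → ℕ → ℕ → σ → σ → Prop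
  | refl (s : σ) : Exec Rc Rmm Rme 0 0 0 s s
  | cstep {s s' s'' : σ} {c m e : ℕ} :
      Rc s s' → Exec Rc Rmm Rme c m e s' s'' → Exec Rc Rmm Rme (c + 1) m e s s''
  | mstep {s s' s'' : σ} {c m e : ℕ} :
      Rmm s s' → Exec Rc Rmm Rme c m e s' s'' → Exec Rc Rmm Rme c (m + 1) e s s''
  | estep {s s' s'' : σ} {c m e : ℕ} :
      Rme s s' → Exec Rc Rmm Rme c m e s' s'' → Exec Rc Rmm Rme c m (e + 1) s s''

/-- Derivations in the calculus, counting multiplicative and exponential steps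
    (the length of the derivation is the sum of the two counts). -/
inductive RedSeq {τ : Type*} (Cm Ce : τ → τ → Prop) : ℕ → ℕ → τ → τ → Prop
  | refl (t : τ) : RedSeq Cm Ce 0 0 t t
  | mstep {t t' t'' : τ} {m e : ℕ} :
      Cm t t' → RedSeq Cm Ce m e t' t'' → RedSeq Cm Ce (m + 1) e t t''
  | estep {t t' t'' : τ} {m e : ℕ} :
      Ce t t' → RedSeq Cm Ce m e t' t'' → RedSeq Cm Ce m (e + 1) t t''

/-- Abstract Simulation Theorem for distilleries.
    Hypotheses spell out the definition of a distillery: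
    a deterministic machine with commutative/multiplicative/exponential
    transitions, a calculus (Cm, Ce), a structural equivalence `E` that is a
    strong bisimulation, and a decoding sending (on reachable states)
    commutative transitions to `E`, multiplicative ones to `Cm`-step followed by
    `E`, and exponential ones to `Ce`-step followed by `E`. Every machine
    execution from a reachable state is then simulated by a derivation with the
    same number of multiplicative, exponential and principal steps. -/
theorem distillery_simulation {σ τ : Type*}
    (Rc Rmm Rme : σ → σ → Prop)            -- machine transitions
    (Cm Ce : τ → τ → Prop)                 -- the calculus
    (E : τ → τ → Prop)                     -- structural equivalence
    (decode : σ → τ)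
    (reachable : σ → Prop)
    (hreach : ∀ s s', reachable s → (Rc s s' ∨ Rmm s s' ∨ Rme s s') → reachable s')
    (hdet : ∀ s s₁ s₂, (Rc s s₁ ∨ Rmm s s₁ ∨ Rme s s₁) →
      (Rc s s₂ ∨ Rmm s s₂ ∨ Rme s s₂) → s₁ = s₂)
    (hequiv : Equivalence E)
    (hbisimM : ∀ t u t', E t u → Cm t t' → ∃ u', Cm u u' ∧ E t' u')
    (hbisimE : ∀ t u t', E t u → Ce t t' → ∃ u', Ce u u' ∧ E t' u')
    (hdecC : ∀ s s', reachable s → Rc s s' → E (decode s) (decode s'))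
    (hdecM : ∀ s s', reachable s → Rmm s s' →
      ∃ w, Cm (decode s) w ∧ E w (decode s'))
    (hdecE : ∀ s s', reachable s → Rme s s' →
      ∃ w, Ce (decode s) w ∧ E w (decode s')) :
    ∀ (c m e : ℕ) (s s' : σ), reachable s → Exec Rc Rmm Rme c m e s s' →
      ∃ t, RedSeq Cm Ce m e (decode s) t ∧ E t (decode s') := by
  have key : ∀ (c m e : ℕ) (s s' : σ), Exec Rc Rmm Rme c m e s s' → reachable s →
      ∀ u, E u (decode s) → ∃ t, RedSeq Cm Ce m e u t ∧ E t (decode s') := by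
    intro c m e s s' hex
    induction hex with
    | refl s => exact fun _ u hu => ⟨u, RedSeq.refl u, hu⟩
    | cstep h _ ih =>
      intro hr u hu
      exact ih (hreach _ _ hr (Or.inl h)) u
        (hequiv.trans hu (hdecC _ _ hr h))
    | @mstep s s' s'' c m e h _ ih =>
      intro hr u hu
      obtain ⟨w, hw, hwE⟩ := hdecM _ _ hr h
      obtain ⟨u', hu', hE⟩ := hbisimM _ _ _ (hequiv.symm hu) hw
      obtain ⟨t, ht, htE⟩ := ih (hreach _ _ hr (Or.inr (Or.inl h))) u'
        (hequiv.trans (hequiv.symm hE) hwE)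
      exact ⟨t, RedSeq.mstep hu' ht, htE⟩
    | @estep s s' s'' c m e h _ ih =>
      intro hr u hu
      obtain ⟨w, hw, hwE⟩ := hdecE _ _ hr h
      obtain ⟨u', hu', hE⟩ := hbisimE _ _ _ (hequiv.symm hu) hw
      obtain ⟨t, ht, htE⟩ := ih (hreach _ _ hr (Or.inr (Or.inr h))) u'
        (hequiv.trans (hequiv.symm hE) hwE)
      exact ⟨t, RedSeq.estep hu' ht, htE⟩
  intro c m e s s' hr hex
  exact key c m e s s' hex hr (decode s) (hequiv.refl _)
end

section
/- Abstract Reverse Simulation for reflective distilleries: let D be a reflective distillery and s an initial state. For every derivation d : decode(s) ⊸* t there is a machine execution ρ : s →* s' such that t ≡ decode(s'), and the numbers of multiplicative, exponential, and principal steps of ρ equal the corresponding counts of d. -/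
/-- Abstract Reverse Simulation for reflective distilleries: every derivation
    from the decoding of an initial state `s` is simulated by a machine
    execution from `s`, with the same numbers of multiplicative, exponential
    (hence principal) steps. -/
theorem distillery_reverse_simulation {σ τ : Type*}
    (Rc Rmm Rme : σ → σ → Prop)            -- machine transitions
    (Cm Ce : τ → τ → Prop)                 -- the calculus
    (E : τ → τ → Prop)                     -- structural equivalence
    (decode : σ → τ)
    (reachable : σ → Prop)
    (nfc : σ → σ)                          -- commutative normal form
    (hreach : ∀ s s', reachable s → (Rc s s' ∨ Rmm s s' ∨ Rme s s') → reachable s')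
    (hdetMach : ∀ s s₁ s₂, (Rc s s₁ ∨ Rmm s s₁ ∨ Rme s s₁) →
      (Rc s s₂ ∨ Rmm s s₂ ∨ Rme s s₂) → s₁ = s₂)
    (hdetCalc : ∀ t u₁ u₂, (Cm t u₁ ∨ Ce t u₁) → (Cm t u₂ ∨ Ce t u₂) → u₁ = u₂)
    (hdetLabel : ∀ t u₁ u₂, Cm t u₁ → Ce t u₂ → False)
    (hequiv : Equivalence E)
    (hbisimM : ∀ t u t', E t u → Cm t t' → ∃ u', Cm u u' ∧ E t' u')
    (hbisimE : ∀ t u t', E t u → Ce t t' → ∃ u', Ce u u' ∧ E t' u')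
    (hdecC : ∀ s s', reachable s → Rc s s' → E (decode s) (decode s'))
    (hdecM : ∀ s s', reachable s → Rmm s s' →
      ∃ w, Cm (decode s) w ∧ E w (decode s'))
    (hdecE : ∀ s s', reachable s → Rme s s' →
      ∃ w, Ce (decode s) w ∧ E w (decode s'))
    (hnfc : ∀ s, reachable s →
      Relation.ReflTransGen Rc s (nfc s) ∧ ∀ s', ¬ Rc (nfc s) s')
    (hprogM : ∀ s t, reachable s → (∀ s', ¬ Rc s s') → Cm (decode s) t →
      ∃ s', Rmm s s')
    (hprogE : ∀ s t, reachable s → (∀ s', ¬ Rc s s') → Ce (decode s) t →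
      ∃ s', Rme s s') :
    ∀ (s : σ) (m e : ℕ) (t : τ), reachable s →   -- `s` an initial state
      RedSeq Cm Ce m e (decode s) t →
      ∃ (c : ℕ) (s' : σ), Exec Rc Rmm Rme c m e s s' ∧ E t (decode s') := by
  -- reachability is preserved along commutative trails
  have reach_rtg : ∀ {s s' : σ}, Relation.ReflTransGen Rc s s' → reachable s →
      reachable s' := by
    intro s s' h hr
    induction h with
    | refl => exact hr
    | tail _ hbc ih => exact hreach _ _ ih (Or.inl hbc)
  -- decoding is E-invariant along commutative trails
  have dec_rtg : ∀ {s s' : σ}, Relation.ReflTransGen Rc s s' → reachable s →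
      E (decode s) (decode s') := by
    intro s s' h hr
    induction h with
    | refl => exact hequiv.refl _
    | tail hab hbc ih =>
        exact hequiv.trans (ih) (hdecC _ _ (reach_rtg hab hr) hbc)
  -- prepend a commutative trail to an execution
  have exec_prepend : ∀ {s s' : σ}, Relation.ReflTransGen Rc s s' →
      ∀ {c m e : ℕ} {s'' : σ}, Exec Rc Rmm Rme c m e s' s'' →
      ∃ c', Exec Rc Rmm Rme c' m e s s'' := by
    intro s s' h
    induction h using Relation.ReflTransGen.head_induction_on with
    | refl => intro c m e s'' hx; exact ⟨c, hx⟩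
    | head hab _ ih =>
        intro c m e s'' hx
        obtain ⟨c', hx'⟩ := ih hx
        exact ⟨c' + 1, Exec.cstep hab hx'⟩
  have key : ∀ {m e : ℕ} {t t' : τ}, RedSeq Cm Ce m e t t' →
      ∀ s, reachable s → E t (decode s) →
      ∃ (c : ℕ) (s' : σ), Exec Rc Rmm Rme c m e s s' ∧ E t' (decode s') := by
    intro m e t t' hred
    induction hred with
    | refl t => intro s hr hE; exact ⟨0, s, Exec.refl s, hE⟩
    | @mstep t t1 t'' m e hCm _ ih =>
        intro s hr hE
        obtain ⟨hrtg, hnf⟩ := hnfc s hr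
        have hrn : reachable (nfc s) := reach_rtg hrtg hr
        have hEn : E t (decode (nfc s)) := hequiv.trans hE (dec_rtg hrtg hr)
        obtain ⟨u', hCu', hEu'⟩ := hbisimM _ _ _ hEn hCm
        obtain ⟨s1, hs1⟩ := hprogM _ _ hrn hnf hCu'
        obtain ⟨w, hCw, hEw⟩ := hdecM _ _ hrn hs1
        have : w = u' := hdetCalc _ _ _ (Or.inl hCw) (Or.inl hCu')
        subst this
        have hE1 : E t1 (decode s1) :=
          hequiv.trans hEu' hEw
        have hr1 : reachable s1 := hreach _ _ hrn (Or.inr (Or.inl hs1))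
        obtain ⟨c, s', hexec, hE'⟩ := ih s1 hr1 hE1
        obtain ⟨c', hexec'⟩ := exec_prepend hrtg (Exec.mstep hs1 hexec)
        exact ⟨c', s', hexec', hE'⟩
    | @estep t t1 t'' m e hCe _ ih =>
        intro s hr hE
        obtain ⟨hrtg, hnf⟩ := hnfc s hr
        have hrn : reachable (nfc s) := reach_rtg hrtg hr
        have hEn : E t (decode (nfc s)) := hequiv.trans hE (dec_rtg hrtg hr)
        obtain ⟨u', hCu', hEu'⟩ := hbisimE _ _ _ hEn hCe
        obtain ⟨s1, hs1⟩ := hprogE _ _ hrn hnf hCu'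
        obtain ⟨w, hCw, hEw⟩ := hdecE _ _ hrn hs1
        have : w = u' := hdetCalc _ _ _ (Or.inr hCw) (Or.inr hCu')
        subst this
        have hE1 : E t1 (decode s1) :=
          hequiv.trans hEu' hEw
        have hr1 : reachable s1 := hreach _ _ hrn (Or.inr (Or.inr hs1))
        obtain ⟨c, s', hexec, hE'⟩ := ih s1 hr1 hE1
        obtain ⟨c', hexec'⟩ := exec_prepend hrtg (Exec.estep hs1 hexec)
        exact ⟨c', s', hexec', hE'⟩
  intro s m e t hr hred
  exact key hred s hr (hequiv.refl _)
end
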